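/- Time-sharing lemma (eqs. (45)–(46) in Appendix B). Let (W,U,X,Y₁,Y₂) be random variables taking values in finite sets such that (Y₁,Y₂) − X − U − W is a Markov chain. Let λ ∈ (0,1], and let Θ be a random variable with values in {θ₁,θ₂}, independent of (W,U,X,Y₁,Y₂), with ℙ(Θ = θ₁) = λ. Define W̃ = W if Θ = θ₁ and W̃ = U if Θ = θ₂, and set W* = (Θ, W̃). Then: (1) I(U;Y₁|W*) − I(U;Y₂|W*) = λ·[ I(U;Y₁|W) − I(U;Y₂|W) ]; and (2) I(W*;Y₂) = I(W;Y₂) + (1−λ)·I(U;Y₂|W); in particular I(W*;Y₂) ≥ I(W;Y₂). -/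

import Mathlib

open scoped Classical BigOperators

noncomputable section

/-- Entropy (base 2) of a finitely supported distribution given as a function. -/
def entFun {α : Type} [Fintype α] (q : α → ℝ) : ℝ :=
  -∑ a, q a * Real.logb 2 (q a)

/-- Distribution (pushforward) of the random variable `A` under the pmf `p`. -/
def distOf {Ω α : Type} [Fintype Ω] [Fintype α] (p : Ω → ℝ) (A : Ω → α) : α → ℝ :=
  fun a => ∑ ω, if A ω = a then p ω else 0

/-- Shannon entropy `H(A)` (base 2). -/
def Hent {Ω α : Type} [Fintype Ω] [Fintype α] (p : Ω → ℝ) (A : Ω → α) : ℝ :=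
  entFun (distOf p A)

/-- Conditional entropy `H(A|B)`. -/
def CHent {Ω α β : Type} [Fintype Ω] [Fintype α] [Fintype β]
    (p : Ω → ℝ) (A : Ω → α) (B : Ω → β) : ℝ :=
  Hent p (fun ω => (A ω, B ω)) - Hent p B

/-- Mutual information `I(A;B)`. -/
def MI {Ω α β : Type} [Fintype Ω] [Fintype α] [Fintype β]
    (p : Ω → ℝ) (A : Ω → α) (B : Ω → β) : ℝ :=
  Hent p A + Hent p B - Hent p (fun ω => (A ω, B ω))

/-- Conditional mutual information `I(A;B|C)`. -/
def CMI {Ω α β γ : Type} [Fintype Ω] [Fintype α] [Fintype β] [Fintype γ]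
    (p : Ω → ℝ) (A : Ω → α) (B : Ω → β) (C : Ω → γ) : ℝ :=
  Hent p (fun ω => (A ω, C ω)) + Hent p (fun ω => (B ω, C ω))
    - Hent p (fun ω => (A ω, B ω, C ω)) - Hent p C

/-- `p` is a probability mass function on the finite type `α`. -/
def IsPMF {α : Type} [Fintype α] (p : α → ℝ) : Prop :=
  (∀ a, 0 ≤ p a) ∧ ∑ a, p a = 1

/-- `A` and `B` are conditionally independent given `C` (under the pmf `p`). -/
def CondIndep {Ω α β γ : Type} [Fintype Ω] [Fintype α] [Fintype β] [Fintype γ]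
    (p : Ω → ℝ) (A : Ω → α) (B : Ω → β) (C : Ω → γ) : Prop :=
  ∀ a b c,
    distOf p (fun ω => (A ω, B ω, C ω)) (a, b, c) * distOf p C c
      = distOf p (fun ω => (A ω, C ω)) (a, c) * distOf p (fun ω => (B ω, C ω)) (b, c)


section Helpers
variable {Ω : Type} [Fintype Ω] (p : Ω → ℝ)

lemma distOf_nonneg (hp : ∀ ω, 0 ≤ p ω) {α : Type} [Fintype α] (A : Ω → α) (a : α) :
    0 ≤ distOf p A a := by
  unfold distOf
  refine Finset.sum_nonneg fun ω _ => ?_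
  split <;> simp [hp ω]

lemma sum_distOf (hp : IsPMF p) {α : Type} [Fintype α] (A : Ω → α) :
    ∑ a, distOf p A a = 1 := by
  unfold distOf
  rw [Finset.sum_comm]
  simpa [Finset.sum_ite_eq] using hp.2

lemma distOf_comp_apply {α β : Type} [Fintype α] [Fintype β] [DecidableEq β] (g : α → β) (A : Ω → α) (b : β) :
    distOf p (fun ω => g (A ω)) b = ∑ a, if g a = b then distOf p A a else 0 := by
  unfold distOf
  rw [show (∑ a : α, if g a = b then ∑ ω, if A ω = a then p ω else 0 else 0)
      = ∑ a : α, ∑ ω, if g a = b then (if A ω = a then p ω else 0) else 0 from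
    Finset.sum_congr rfl fun a _ => by split <;> simp]
  rw [Finset.sum_comm]
  refine Finset.sum_congr rfl fun ω _ => ?_
  have h : ∀ a, (if g a = b then (if A ω = a then p ω else 0) else 0)
      = if A ω = a then (if g a = b then p ω else 0) else 0 := by
    intro a; split_ifs <;> rfl
  simp [h, Finset.sum_ite_eq]

lemma Hent_comp_inj {α β : Type} [Fintype α] [Fintype β] {f : α → β}
    (hf : Function.Injective f) (A : Ω → α) :
    Hent p (fun ω => f (A ω)) = Hent p A := by
  unfold Hent entFun
  have hval : ∀ a, distOf p (fun ω => f (A ω)) (f a) = distOf p A a := by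
    intro a
    rw [distOf_comp_apply]
    simp [hf.eq_iff, Finset.sum_ite_eq']
  have hzero : ∀ b, b ∉ Finset.univ.image f → distOf p (fun ω => f (A ω)) b = 0 := by
    intro b hb
    rw [distOf_comp_apply]
    refine Finset.sum_eq_zero fun a _ => ?_
    have : f a ≠ b := fun h => hb (by simpa [← h] using Finset.mem_image_of_mem f (Finset.mem_univ a))
    simp [this]
  congr 1
  rw [← Finset.sum_subset (Finset.subset_univ (Finset.univ.image f))
    (fun b _ hb => by simp [hzero b hb])]
  rw [Finset.sum_image (fun a _ a' _ h => hf h)]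
  exact Finset.sum_congr rfl fun a _ => by rw [hval]

end Helpers

section Marg
variable {Ω : Type} [Fintype Ω] (p : Ω → ℝ)
variable {α β γ : Type} [Fintype α] [Fintype β] [Fintype γ]
variable (A : Ω → α) (B : Ω → β) (C : Ω → γ)

lemma marg_AC (a : α) (c : γ) :
    distOf p (fun ω => (A ω, C ω)) (a, c)
      = ∑ b, distOf p (fun ω => (A ω, B ω, C ω)) (a, b, c) := by
  unfold distOf
  rw [Finset.sum_comm]
  refine Finset.sum_congr rfl fun ω _ => ?_
  by_cases h1 : A ω = a <;> by_cases h2 : C ω = c <;>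
    simp [Prod.ext_iff, h1, h2, ite_and, Finset.sum_ite_eq]

lemma marg_BC (b : β) (c : γ) :
    distOf p (fun ω => (B ω, C ω)) (b, c)
      = ∑ a, distOf p (fun ω => (A ω, B ω, C ω)) (a, b, c) := by
  unfold distOf
  rw [Finset.sum_comm]
  refine Finset.sum_congr rfl fun ω _ => ?_
  by_cases h1 : B ω = b <;> by_cases h2 : C ω = c <;>
    simp [Prod.ext_iff, h1, h2, ite_and, Finset.sum_ite_eq]

lemma marg_snd (c : γ) :
    distOf p C c = ∑ a, distOf p (fun ω => (A ω, C ω)) (a, c) := by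
  unfold distOf
  rw [Finset.sum_comm]
  refine Finset.sum_congr rfl fun ω _ => ?_
  by_cases h2 : C ω = c <;>
    simp [Prod.ext_iff, h2, ite_and, Finset.sum_ite_eq]

lemma marg_C (c : γ) :
    distOf p C c = ∑ a, ∑ b, distOf p (fun ω => (A ω, B ω, C ω)) (a, b, c) := by
  calc distOf p C c = ∑ b, distOf p (fun ω => (B ω, C ω)) (b, c) := marg_snd p B C c
    _ = ∑ b, ∑ a, distOf p (fun ω => (A ω, B ω, C ω)) (a, b, c) :=
        Finset.sum_congr rfl fun b _ => marg_BC p A B C b c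
    _ = ∑ a, ∑ b, distOf p (fun ω => (A ω, B ω, C ω)) (a, b, c) := Finset.sum_comm

lemma sum_P_mulAC (f : α × γ → ℝ) :
    ∑ x : α × β × γ, distOf p (fun ω => (A ω, B ω, C ω)) x * f (x.1, x.2.2)
      = ∑ y : α × γ, distOf p (fun ω => (A ω, C ω)) y * f y := by
  simp only [Fintype.sum_prod_type]
  refine Finset.sum_congr rfl fun a _ => ?_
  rw [Finset.sum_comm]
  refine Finset.sum_congr rfl fun c _ => ?_
  rw [marg_AC p A B C, Finset.sum_mul]

lemma sum_P_mulBC (f : β × γ → ℝ) :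
    ∑ x : α × β × γ, distOf p (fun ω => (A ω, B ω, C ω)) x * f x.2
      = ∑ y : β × γ, distOf p (fun ω => (B ω, C ω)) y * f y := by
  calc ∑ x : α × β × γ, distOf p (fun ω => (A ω, B ω, C ω)) x * f x.2
      = ∑ a, ∑ b, ∑ c, distOf p (fun ω => (A ω, B ω, C ω)) (a, b, c) * f (b, c) := by
        simp [Fintype.sum_prod_type]
    _ = ∑ b, ∑ a, ∑ c, distOf p (fun ω => (A ω, B ω, C ω)) (a, b, c) * f (b, c) :=
        Finset.sum_comm
    _ = ∑ b, ∑ c, ∑ a, distOf p (fun ω => (A ω, B ω, C ω)) (a, b, c) * f (b, c) :=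
        Finset.sum_congr rfl fun b _ => Finset.sum_comm
    _ = ∑ y : β × γ, distOf p (fun ω => (B ω, C ω)) y * f y := by
        rw [Fintype.sum_prod_type]
        refine Finset.sum_congr rfl fun b _ => Finset.sum_congr rfl fun c _ => ?_
        rw [marg_BC p A B C, Finset.sum_mul]

lemma sum_P_mulC (f : γ → ℝ) :
    ∑ x : α × β × γ, distOf p (fun ω => (A ω, B ω, C ω)) x * f x.2.2
      = ∑ c, distOf p C c * f c := by
  calc ∑ x : α × β × γ, distOf p (fun ω => (A ω, B ω, C ω)) x * f x.2.2
      = ∑ a, ∑ b, ∑ c, distOf p (fun ω => (A ω, B ω, C ω)) (a, b, c) * f c := by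
        simp [Fintype.sum_prod_type]
    _ = ∑ a, ∑ c, ∑ b, distOf p (fun ω => (A ω, B ω, C ω)) (a, b, c) * f c :=
        Finset.sum_congr rfl fun a _ => Finset.sum_comm
    _ = ∑ c, ∑ a, ∑ b, distOf p (fun ω => (A ω, B ω, C ω)) (a, b, c) * f c :=
        Finset.sum_comm
    _ = ∑ c, distOf p C c * f c := by
        refine Finset.sum_congr rfl fun c _ => ?_
        rw [marg_C p A B C, Finset.sum_mul]
        exact Finset.sum_congr rfl fun a _ => by rw [Finset.sum_mul]

lemma CMI_expand :
    CMI p A B C = ∑ x : α × β × γ,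
      distOf p (fun ω => (A ω, B ω, C ω)) x *
        (Real.logb 2 (distOf p (fun ω => (A ω, B ω, C ω)) x)
          + Real.logb 2 (distOf p C x.2.2)
          - Real.logb 2 (distOf p (fun ω => (A ω, C ω)) (x.1, x.2.2))
          - Real.logb 2 (distOf p (fun ω => (B ω, C ω)) x.2)) := by
  unfold CMI Hent entFun
  simp only [mul_add, mul_sub, Finset.sum_add_distrib, Finset.sum_sub_distrib]
  rw [sum_P_mulAC p A B C (fun y => Real.logb 2 (distOf p (fun ω => (A ω, C ω)) y)),
    sum_P_mulBC p A B C (fun y => Real.logb 2 (distOf p (fun ω => (B ω, C ω)) y)),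
    sum_P_mulC p A B C (fun c => Real.logb 2 (distOf p C c))]
  ring

end Marg

section CMIfacts
variable {Ω : Type} [Fintype Ω] (p : Ω → ℝ)
variable {α β γ : Type} [Fintype α] [Fintype β] [Fintype γ]
variable (A : Ω → α) (B : Ω → β) (C : Ω → γ)

lemma P_le_AC (hp0 : ∀ ω, 0 ≤ p ω) (x : α × β × γ) :
    distOf p (fun ω => (A ω, B ω, C ω)) x ≤ distOf p (fun ω => (A ω, C ω)) (x.1, x.2.2) := by
  rw [marg_AC p A B C]
  exact Finset.single_le_sum (f := fun b => distOf p (fun ω => (A ω, B ω, C ω)) (x.1, b, x.2.2))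
    (fun b _ => distOf_nonneg p hp0 _ _) (Finset.mem_univ x.2.1)

lemma P_le_BC (hp0 : ∀ ω, 0 ≤ p ω) (x : α × β × γ) :
    distOf p (fun ω => (A ω, B ω, C ω)) x ≤ distOf p (fun ω => (B ω, C ω)) x.2 := by
  rw [marg_BC p A B C]
  exact Finset.single_le_sum (f := fun a => distOf p (fun ω => (A ω, B ω, C ω)) (a, x.2.1, x.2.2))
    (fun a _ => distOf_nonneg p hp0 _ _) (Finset.mem_univ x.1)

lemma P_le_C (hp0 : ∀ ω, 0 ≤ p ω) (x : α × β × γ) :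
    distOf p (fun ω => (A ω, B ω, C ω)) x ≤ distOf p C x.2.2 :=
  le_trans (P_le_AC p A B C hp0 x)
    (by rw [marg_snd p A C]
        exact Finset.single_le_sum (f := fun a => distOf p (fun ω => (A ω, C ω)) (a, x.2.2))
          (fun a _ => distOf_nonneg p hp0 _ _) (Finset.mem_univ x.1))

lemma CMI_eq_zero (hp : IsPMF p) (h : CondIndep p A B C) : CMI p A B C = 0 := by
  rw [CMI_expand]
  refine Finset.sum_eq_zero fun x _ => ?_
  by_cases hP : distOf p (fun ω => (A ω, B ω, C ω)) x = 0
  · rw [hP]; ring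
  · have hPpos : 0 < distOf p (fun ω => (A ω, B ω, C ω)) x :=
      lt_of_le_of_ne (distOf_nonneg p hp.1 _ x) (Ne.symm hP)
    have hACpos : 0 < distOf p (fun ω => (A ω, C ω)) (x.1, x.2.2) :=
      lt_of_lt_of_le hPpos (P_le_AC p A B C hp.1 x)
    have hBCpos : 0 < distOf p (fun ω => (B ω, C ω)) x.2 :=
      lt_of_lt_of_le hPpos (P_le_BC p A B C hp.1 x)
    have hCpos : 0 < distOf p C x.2.2 := lt_of_lt_of_le hPpos (P_le_C p A B C hp.1 x)
    have heq : distOf p (fun ω => (A ω, B ω, C ω)) x * distOf p C x.2.2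
        = distOf p (fun ω => (A ω, C ω)) (x.1, x.2.2) * distOf p (fun ω => (B ω, C ω)) x.2 :=
      h x.1 x.2.1 x.2.2
    have hlog : Real.logb 2 (distOf p (fun ω => (A ω, B ω, C ω)) x)
          + Real.logb 2 (distOf p C x.2.2)
        = Real.logb 2 (distOf p (fun ω => (A ω, C ω)) (x.1, x.2.2))
          + Real.logb 2 (distOf p (fun ω => (B ω, C ω)) x.2) := by
      rw [← Real.logb_mul hP (ne_of_gt hCpos), heq,
        Real.logb_mul (ne_of_gt hACpos) (ne_of_gt hBCpos)]
    rw [show Real.logb 2 (distOf p (fun ω => (A ω, B ω, C ω)) x)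
          + Real.logb 2 (distOf p C x.2.2)
          - Real.logb 2 (distOf p (fun ω => (A ω, C ω)) (x.1, x.2.2))
          - Real.logb 2 (distOf p (fun ω => (B ω, C ω)) x.2) = 0 by rw [hlog]; ring]
    ring

lemma CMI_nonneg (hp : IsPMF p) : 0 ≤ CMI p A B C := by
  have h2 : (0:ℝ) < Real.log 2 := Real.log_pos one_lt_two
  have key : ∀ x : α × β × γ,
      (Real.log 2)⁻¹ * (distOf p (fun ω => (A ω, B ω, C ω)) x
          - distOf p (fun ω => (A ω, C ω)) (x.1, x.2.2) * distOf p (fun ω => (B ω, C ω)) x.2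
              / distOf p C x.2.2)
        ≤ distOf p (fun ω => (A ω, B ω, C ω)) x *
            (Real.logb 2 (distOf p (fun ω => (A ω, B ω, C ω)) x)
              + Real.logb 2 (distOf p C x.2.2)
              - Real.logb 2 (distOf p (fun ω => (A ω, C ω)) (x.1, x.2.2))
              - Real.logb 2 (distOf p (fun ω => (B ω, C ω)) x.2)) := by
    intro x
    by_cases hP : distOf p (fun ω => (A ω, B ω, C ω)) x = 0
    · have hrat : 0 ≤ distOf p (fun ω => (A ω, C ω)) (x.1, x.2.2)
          * distOf p (fun ω => (B ω, C ω)) x.2 / distOf p C x.2.2 :=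
        div_nonneg (mul_nonneg (distOf_nonneg p hp.1 _ _) (distOf_nonneg p hp.1 _ _))
          (distOf_nonneg p hp.1 _ _)
      rw [hP]
      have : 0 ≤ (Real.log 2)⁻¹ := inv_nonneg.2 h2.le
      nlinarith
    · have hPpos : 0 < distOf p (fun ω => (A ω, B ω, C ω)) x :=
        lt_of_le_of_ne (distOf_nonneg p hp.1 _ x) (Ne.symm hP)
      have hACpos : 0 < distOf p (fun ω => (A ω, C ω)) (x.1, x.2.2) :=
        lt_of_lt_of_le hPpos (P_le_AC p A B C hp.1 x)
      have hBCpos : 0 < distOf p (fun ω => (B ω, C ω)) x.2 :=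
        lt_of_lt_of_le hPpos (P_le_BC p A B C hp.1 x)
      have hCpos : 0 < distOf p C x.2.2 := lt_of_lt_of_le hPpos (P_le_C p A B C hp.1 x)
      set Pa := distOf p (fun ω => (A ω, B ω, C ω)) x with hPa
      set Qac := distOf p (fun ω => (A ω, C ω)) (x.1, x.2.2) with hQac
      set Qbc := distOf p (fun ω => (B ω, C ω)) x.2 with hQbc
      set Qc := distOf p C x.2.2 with hQc
      have hrpos : 0 < Qac * Qbc / (Pa * Qc) := by positivity
      have hlog_le : Real.log (Qac * Qbc / (Pa * Qc)) ≤ Qac * Qbc / (Pa * Qc) - 1 :=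
        Real.log_le_sub_one_of_pos hrpos
      have hlogr : Real.log (Qac * Qbc / (Pa * Qc))
          = Real.log Qac + Real.log Qbc - Real.log Pa - Real.log Qc := by
        rw [Real.log_div (by positivity) (by positivity),
          Real.log_mul (ne_of_gt hACpos) (ne_of_gt hBCpos),
          Real.log_mul (ne_of_gt hPpos) (ne_of_gt hCpos)]
        ring
      have hbracket : Real.logb 2 Pa + Real.logb 2 Qc - Real.logb 2 Qac - Real.logb 2 Qbc
          = -(Real.log (Qac * Qbc / (Pa * Qc)) * (Real.log 2)⁻¹) := by
        simp only [Real.logb]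
        rw [hlogr]
        ring
      rw [hbracket]
      have h1 : Pa * Real.log (Qac * Qbc / (Pa * Qc)) ≤ Pa * (Qac * Qbc / (Pa * Qc) - 1) :=
        mul_le_mul_of_nonneg_left hlog_le hPpos.le
      have hPr : Pa * (Qac * Qbc / (Pa * Qc)) = Qac * Qbc / Qc := by
        field_simp
      have hinv : 0 ≤ (Real.log 2)⁻¹ := inv_nonneg.2 h2.le
      have h3 : (Real.log 2)⁻¹ * (Pa * Real.log (Qac * Qbc / (Pa * Qc)))
          ≤ (Real.log 2)⁻¹ * (Qac * Qbc / Qc - Pa) := by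
        have := mul_le_mul_of_nonneg_left h1 hinv
        calc (Real.log 2)⁻¹ * (Pa * Real.log (Qac * Qbc / (Pa * Qc)))
            ≤ (Real.log 2)⁻¹ * (Pa * (Qac * Qbc / (Pa * Qc) - 1)) := this
          _ = (Real.log 2)⁻¹ * (Qac * Qbc / Qc - Pa) := by rw [mul_sub, hPr]; ring
      nlinarith [h3]
  have hsumratio : ∑ x : α × β × γ,
      distOf p (fun ω => (A ω, C ω)) (x.1, x.2.2) * distOf p (fun ω => (B ω, C ω)) x.2
        / distOf p C x.2.2 ≤ 1 := by
    have hper : ∀ c, ∑ a, ∑ b, distOf p (fun ω => (A ω, C ω)) (a, c)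
        * distOf p (fun ω => (B ω, C ω)) (b, c) / distOf p C c ≤ distOf p C c := by
      intro c
      have e : ∑ a, ∑ b, distOf p (fun ω => (A ω, C ω)) (a, c)
          * distOf p (fun ω => (B ω, C ω)) (b, c) / distOf p C c
          = distOf p C c * (distOf p C c / distOf p C c) := by
        calc ∑ a, ∑ b, distOf p (fun ω => (A ω, C ω)) (a, c)
              * distOf p (fun ω => (B ω, C ω)) (b, c) / distOf p C c
            = ∑ a, distOf p (fun ω => (A ω, C ω)) (a, c)
                * ((∑ b, distOf p (fun ω => (B ω, C ω)) (b, c)) / distOf p C c) := by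
              refine Finset.sum_congr rfl fun a _ => ?_
              simp only [mul_div_assoc]
              rw [← Finset.mul_sum, ← Finset.sum_div]
          _ = (∑ a, distOf p (fun ω => (A ω, C ω)) (a, c))
                * ((∑ b, distOf p (fun ω => (B ω, C ω)) (b, c)) / distOf p C c) := by
              rw [← Finset.sum_mul]
          _ = distOf p C c * (distOf p C c / distOf p C c) := by
              rw [← marg_snd p A C c, ← marg_snd p B C c]
      rw [e]
      by_cases hc : distOf p C c = 0
      · simp [hc]
      · rw [div_self hc, mul_one]
    calc ∑ x : α × β × γ, distOf p (fun ω => (A ω, C ω)) (x.1, x.2.2)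
          * distOf p (fun ω => (B ω, C ω)) x.2 / distOf p C x.2.2
        = ∑ a, ∑ b, ∑ c, distOf p (fun ω => (A ω, C ω)) (a, c)
            * distOf p (fun ω => (B ω, C ω)) (b, c) / distOf p C c := by
          simp [Fintype.sum_prod_type]
      _ = ∑ a, ∑ c, ∑ b, distOf p (fun ω => (A ω, C ω)) (a, c)
            * distOf p (fun ω => (B ω, C ω)) (b, c) / distOf p C c :=
          Finset.sum_congr rfl fun a _ => Finset.sum_comm
      _ = ∑ c, ∑ a, ∑ b, distOf p (fun ω => (A ω, C ω)) (a, c)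
            * distOf p (fun ω => (B ω, C ω)) (b, c) / distOf p C c := Finset.sum_comm
      _ ≤ ∑ c, distOf p C c := Finset.sum_le_sum fun c _ => hper c
      _ = 1 := sum_distOf p hp C
  have hP1 : ∑ x : α × β × γ, distOf p (fun ω => (A ω, B ω, C ω)) x = 1 :=
    sum_distOf p hp _
  rw [CMI_expand]
  calc (0:ℝ) ≤ (Real.log 2)⁻¹ * ((∑ x : α × β × γ, distOf p (fun ω => (A ω, B ω, C ω)) x)
        - ∑ x : α × β × γ, distOf p (fun ω => (A ω, C ω)) (x.1, x.2.2)
            * distOf p (fun ω => (B ω, C ω)) x.2 / distOf p C x.2.2) := by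
              have hnn : (0:ℝ) ≤ (∑ x : α × β × γ, distOf p (fun ω => (A ω, B ω, C ω)) x)
                  - ∑ x : α × β × γ, distOf p (fun ω => (A ω, C ω)) (x.1, x.2.2)
              * distOf p (fun ω => (B ω, C ω)) x.2 / distOf p C x.2.2 := by
                  rw [hP1]; linarith
              exact mul_nonneg (inv_nonneg.2 h2.le) hnn
    _ = ∑ x : α × β × γ, (Real.log 2)⁻¹ * (distOf p (fun ω => (A ω, B ω, C ω)) x
          - distOf p (fun ω => (A ω, C ω)) (x.1, x.2.2) * distOf p (fun ω => (B ω, C ω)) x.2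
              / distOf p C x.2.2) := by
        rw [← Finset.sum_sub_distrib, Finset.mul_sum]
    _ ≤ _ := Finset.sum_le_sum fun x _ => key x

end CMIfacts
lemma mul_logb_mul {c x : ℝ} (hc : 0 ≤ c) (hx : 0 ≤ x) :
    (c * x) * Real.logb 2 (c * x) = c * (x * Real.logb 2 x) + (c * Real.logb 2 c) * x := by
  rcases eq_or_lt_of_le hc with h | h
  · simp [← h]
  rcases eq_or_lt_of_le hx with h' | h'
  · simp [← h']
  rw [Real.logb_mul (ne_of_gt h) (ne_of_gt h')]
  ring

section Mix
variable {Ω : Type} [Fintype Ω] (p : Ω → ℝ)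

lemma marg_AB {α β γ : Type} [Fintype α] [Fintype β] [Fintype γ]
    (A : Ω → α) (B : Ω → β) (C : Ω → γ) (a : α) (b : β) :
    distOf p (fun ω => (A ω, B ω)) (a, b)
      = ∑ c, distOf p (fun ω => (A ω, B ω, C ω)) (a, b, c) := by
  unfold distOf
  rw [Finset.sum_comm]
  refine Finset.sum_congr rfl fun ω _ => ?_
  by_cases h1 : A ω = a <;> by_cases h2 : B ω = b <;>
    simp [Prod.ext_iff, h1, h2, ite_and, Finset.sum_ite_eq]

lemma ind_pull {Θ VT α : Type} [Fintype Θ] [Fintype VT] [Fintype α]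
    (Th : Ω → Θ) (V : Ω → VT)
    (hInd : ∀ t v, distOf p (fun ω => (Th ω, V ω)) (t, v) = distOf p Th t * distOf p V v)
    (g : VT → α) (t : Θ) (a : α) :
    distOf p (fun ω => (Th ω, g (V ω))) (t, a)
      = distOf p Th t * distOf p (fun ω => g (V ω)) a := by
  have h1 : distOf p (fun ω => (Th ω, g (V ω))) (t, a)
      = ∑ x : Θ × VT, if (x.1, g x.2) = (t, a) then distOf p (fun ω => (Th ω, V ω)) x else 0 :=
    distOf_comp_apply p (fun x : Θ × VT => (x.1, g x.2)) (fun ω => (Th ω, V ω)) (t, a)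
  have h2 : distOf p (fun ω => g (V ω)) a = ∑ v, if g v = a then distOf p V v else 0 :=
    distOf_comp_apply p g V a
  rw [h1, h2, Finset.mul_sum, Fintype.sum_prod_type]
  calc ∑ t', ∑ v, (if ((t', v).1, g (t', v).2) = (t, a)
          then distOf p (fun ω => (Th ω, V ω)) (t', v) else 0)
      = ∑ v, ∑ t', (if t' = t then (if g v = a
          then distOf p Th t * distOf p V v else 0) else 0) := by
        rw [Finset.sum_comm]
        refine Finset.sum_congr rfl fun v _ => Finset.sum_congr rfl fun t' _ => ?_
        rw [hInd]
        by_cases h3 : t' = t <;> by_cases h4 : g v = a <;>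
          simp [Prod.ext_iff, h3, h4]
    _ = ∑ v, (if g v = a then distOf p Th t * distOf p V v else 0) := by
        refine Finset.sum_congr rfl fun v _ => ?_
        simp [Finset.sum_ite_eq']
    _ = ∑ v, distOf p Th t * (if g v = a then distOf p V v else 0) := by
        refine Finset.sum_congr rfl fun v _ => ?_
        split <;> simp

lemma Hent_mix {α WT UT : Type} [Fintype α] [Fintype WT] [Fintype UT]
    (hp : IsPMF p) (Th : Ω → Bool) (W : Ω → WT) (U : Ω → UT) (B : Ω → α)
    (hind : ∀ t x, distOf p (fun ω => (Th ω, B ω, W ω, U ω)) (t, x)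
        = distOf p Th t * distOf p (fun ω => (B ω, W ω, U ω)) x) :
    Hent p (fun ω => (B ω, Th ω, if Th ω then Sum.inl (W ω) else Sum.inr (U ω)))
      = Hent p Th
        + distOf p Th true * Hent p (fun ω => (B ω, W ω))
        + distOf p Th false * Hent p (fun ω => (B ω, U ω)) := by
  set lamT := distOf p Th true with hlT
  set lamF := distOf p Th false with hlF
  -- pointwise values of the joint distribution
  have dval : ∀ z : α × Bool × (WT ⊕ UT),
      distOf p (fun ω => (B ω, Th ω, if Th ω then Sum.inl (W ω) else Sum.inr (U ω))) z
        = ∑ t, ∑ b, ∑ w, ∑ u,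
            (if (b, t, if t then Sum.inl w else Sum.inr u) = z
              then distOf p Th t * distOf p (fun ω => (B ω, W ω, U ω)) (b, w, u) else 0) := by
    intro z
    have e : distOf p (fun ω => (B ω, Th ω, if Th ω then Sum.inl (W ω) else Sum.inr (U ω))) z
        = ∑ y : Bool × (α × WT × UT),
            if (y.2.1, y.1, if y.1 then Sum.inl y.2.2.1 else Sum.inr y.2.2.2) = z
              then distOf p (fun ω => (Th ω, B ω, W ω, U ω)) y else 0 :=
      distOf_comp_apply p
        (fun y : Bool × (α × WT × UT) =>
          (y.2.1, y.1, if y.1 then Sum.inl y.2.2.1 else Sum.inr y.2.2.2))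
        (fun ω => (Th ω, B ω, W ω, U ω)) z
    rw [e]
    simp only [Fintype.sum_prod_type]
    refine Finset.sum_congr rfl fun t _ => Finset.sum_congr rfl fun b _ =>
      Finset.sum_congr rfl fun w _ => Finset.sum_congr rfl fun u _ => ?_
    rw [hind]
  have d1 : ∀ a w,
      distOf p (fun ω => (B ω, Th ω, if Th ω then Sum.inl (W ω) else Sum.inr (U ω)))
          (a, true, Sum.inl w)
        = lamT * distOf p (fun ω => (B ω, W ω)) (a, w) := by
    intro a w
    rw [dval, Fintype.sum_bool]
    simp only [if_true, if_false, Prod.mk.injEq, reduceCtorEq, ite_false, and_false,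
      Finset.sum_const_zero, add_zero, Sum.inl.injEq]
    rw [marg_AB p B W U a w, Finset.mul_sum]
    simp [ite_and, Finset.sum_ite_eq, Finset.sum_ite_eq']
    rfl
  have d2 : ∀ a u,
      distOf p (fun ω => (B ω, Th ω, if Th ω then Sum.inl (W ω) else Sum.inr (U ω)))
          (a, true, Sum.inr u) = 0 := by
    intro a u
    rw [dval, Fintype.sum_bool]
    simp
  have d3 : ∀ a w,
      distOf p (fun ω => (B ω, Th ω, if Th ω then Sum.inl (W ω) else Sum.inr (U ω)))
          (a, false, Sum.inl w) = 0 := by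
    intro a w
    rw [dval, Fintype.sum_bool]
    simp
  have d4 : ∀ a u,
      distOf p (fun ω => (B ω, Th ω, if Th ω then Sum.inl (W ω) else Sum.inr (U ω)))
          (a, false, Sum.inr u)
        = lamF * distOf p (fun ω => (B ω, U ω)) (a, u) := by
    intro a u
    rw [dval, Fintype.sum_bool]
    simp only [if_true, if_false, Prod.mk.injEq, reduceCtorEq, ite_false, and_false,
      Finset.sum_const_zero, zero_add, Sum.inr.injEq]
    rw [marg_AC p B W U a u, Finset.mul_sum]
    simp [ite_and, Finset.sum_ite_eq, Finset.sum_ite_eq']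
    rfl
  -- nonnegativity
  have hq1 : ∀ y : α × WT, 0 ≤ distOf p (fun ω => (B ω, W ω)) y :=
    fun y => distOf_nonneg p hp.1 _ y
  have hq2 : ∀ y : α × UT, 0 ≤ distOf p (fun ω => (B ω, U ω)) y :=
    fun y => distOf_nonneg p hp.1 _ y
  have hlT0 : 0 ≤ lamT := distOf_nonneg p hp.1 Th true
  have hlF0 : 0 ≤ lamF := distOf_nonneg p hp.1 Th false
  have hq1sum : ∑ y : α × WT, distOf p (fun ω => (B ω, W ω)) y = 1 := sum_distOf p hp _
  have hq2sum : ∑ y : α × UT, distOf p (fun ω => (B ω, U ω)) y = 1 := sum_distOf p hp _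
  have hHTh : Hent p Th = -(lamT * Real.logb 2 lamT + lamF * Real.logb 2 lamF) := by
    unfold Hent entFun
    rw [Fintype.sum_bool]
  -- main computation
  unfold Hent entFun
  rw [Fintype.sum_prod_type]
  calc -(∑ a, ∑ y : Bool × (WT ⊕ UT),
        distOf p (fun ω => (B ω, Th ω, if Th ω then Sum.inl (W ω) else Sum.inr (U ω))) (a, y)
          * Real.logb 2 (distOf p
              (fun ω => (B ω, Th ω, if Th ω then Sum.inl (W ω) else Sum.inr (U ω))) (a, y)))
      = -(∑ a, ((∑ w, (lamT * distOf p (fun ω => (B ω, W ω)) (a, w))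
            * Real.logb 2 (lamT * distOf p (fun ω => (B ω, W ω)) (a, w)))
          + ∑ u, (lamF * distOf p (fun ω => (B ω, U ω)) (a, u))
            * Real.logb 2 (lamF * distOf p (fun ω => (B ω, U ω)) (a, u)))) := by
        congr 1
        refine Finset.sum_congr rfl fun a _ => ?_
        rw [Fintype.sum_prod_type, Fintype.sum_bool, Fintype.sum_sum_type,
          Fintype.sum_sum_type]
        simp only [d1, d2, d3, d4, zero_mul, Finset.sum_const_zero, add_zero, zero_add]
    _ = -(∑ a, ((∑ w, (lamT * (distOf p (fun ω => (B ω, W ω)) (a, w)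
              * Real.logb 2 (distOf p (fun ω => (B ω, W ω)) (a, w)))
            + (lamT * Real.logb 2 lamT) * distOf p (fun ω => (B ω, W ω)) (a, w)))
          + ∑ u, (lamF * (distOf p (fun ω => (B ω, U ω)) (a, u)
              * Real.logb 2 (distOf p (fun ω => (B ω, U ω)) (a, u)))
            + (lamF * Real.logb 2 lamF) * distOf p (fun ω => (B ω, U ω)) (a, u)))) := by
        congr 1
        refine Finset.sum_congr rfl fun a _ => ?_
        congr 1
        · exact Finset.sum_congr rfl fun w _ => mul_logb_mul hlT0 (hq1 (a, w))
        · exact Finset.sum_congr rfl fun u _ => mul_logb_mul hlF0 (hq2 (a, u))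
    _ = -(lamT * (∑ y : α × WT, distOf p (fun ω => (B ω, W ω)) y
              * Real.logb 2 (distOf p (fun ω => (B ω, W ω)) y))
          + (lamT * Real.logb 2 lamT) * (∑ y : α × WT, distOf p (fun ω => (B ω, W ω)) y)
          + (lamF * (∑ y : α × UT, distOf p (fun ω => (B ω, U ω)) y
              * Real.logb 2 (distOf p (fun ω => (B ω, U ω)) y))
          + (lamF * Real.logb 2 lamF) * (∑ y : α × UT, distOf p (fun ω => (B ω, U ω)) y))) := by
        simp only [Fintype.sum_prod_type, Finset.sum_add_distrib, Finset.mul_sum]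
    _ = _ := by
        rw [hq1sum, hq2sum, Fintype.sum_bool]
        ring

end Mix
section Reshuffle
variable {Ω : Type} [Fintype Ω] (p : Ω → ℝ)
variable {α β γ : Type} [Fintype α] [Fintype β] [Fintype γ]

lemma Hent_swap (A : Ω → α) (B : Ω → β) :
    Hent p (fun ω => (A ω, B ω)) = Hent p (fun ω => (B ω, A ω)) :=
  Hent_comp_inj p Prod.swap_injective (fun ω => (B ω, A ω))

lemma Hent_assoc (A : Ω → α) (B : Ω → β) (C : Ω → γ) :
    Hent p (fun ω => (A ω, B ω, C ω)) = Hent p (fun ω => ((A ω, B ω), C ω)) :=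
  Hent_comp_inj p
    (f := fun x : (α × β) × γ => (x.1.1, x.1.2, x.2))
    (fun x y h => by
      simp only [Prod.mk.injEq] at h
      exact Prod.ext_iff.2 ⟨Prod.ext_iff.2 ⟨h.1, h.2.1⟩, h.2.2⟩)
    (fun ω => ((A ω, B ω), C ω))

lemma Hent_diag (A : Ω → α) : Hent p (fun ω => (A ω, A ω)) = Hent p A :=
  Hent_comp_inj p (f := fun a : α => (a, a))
    (fun x y h => (Prod.ext_iff.1 h).1) A

lemma Hent_pair_fst (A : Ω → α) (B : Ω → β) :
    Hent p (fun ω => ((A ω, B ω), A ω)) = Hent p (fun ω => (A ω, B ω)) :=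
  Hent_comp_inj p (f := fun x : α × β => (x, x.1))
    (fun x y h => (Prod.ext_iff.1 h).1) (fun ω => (A ω, B ω))

lemma Hent_unit (A : Ω → α) : Hent p (fun ω => ((), A ω)) = Hent p A :=
  Hent_comp_inj p (f := fun a : α => ((), a))
    (fun x y h => (Prod.ext_iff.1 h).2) A

lemma Hent_perm3 (A : Ω → α) (B : Ω → β) (C : Ω → γ) :
    Hent p (fun ω => (A ω, B ω, C ω)) = Hent p (fun ω => (C ω, B ω, A ω)) :=
  Hent_comp_inj p
    (f := fun x : γ × β × α => (x.2.2, x.2.1, x.1))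
    (fun x y h => by
      simp only [Prod.mk.injEq] at h
      exact Prod.ext_iff.2 ⟨h.2.2, Prod.ext_iff.2 ⟨h.2.1, h.1⟩⟩)
    (fun ω => (C ω, B ω, A ω))

end Reshuffle

/-- **Time-sharing lemma (eqs. (45)–(46), Appendix B).** -/
theorem time_sharing {Ω WT UT XT B1 B2 : Type} [Fintype Ω] [Fintype WT]
    [Fintype UT] [Fintype XT] [Fintype B1] [Fintype B2]
    (p : Ω → ℝ) (hp : IsPMF p)
    (W : Ω → WT) (U : Ω → UT) (X : Ω → XT) (Y1 : Ω → B1) (Y2 : Ω → B2)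
    -- `(Y1,Y2) − X − U − W` is a Markov chain:
    (hMarkov1 : CondIndep p (fun ω => (Y1 ω, Y2 ω)) (fun ω => (U ω, W ω)) X)
    (hMarkov2 : CondIndep p (fun ω => (Y1 ω, Y2 ω, X ω)) W U)
    (lam : ℝ) (hlam0 : 0 < lam) (hlam1 : lam ≤ 1)
    (Th : Ω → Bool)
    -- `Θ` is independent of `(W,U,X,Y1,Y2)`:
    (hThInd : ∀ t v, distOf p (fun ω => (Th ω, W ω, U ω, X ω, Y1 ω, Y2 ω)) (t, v)
        = distOf p Th t * distOf p (fun ω => (W ω, U ω, X ω, Y1 ω, Y2 ω)) v)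
    (hThLam : distOf p Th true = lam) :
    -- `W* = (Θ, W̃)` with `W̃ = W` if `Θ = θ1` and `W̃ = U` if `Θ = θ2`:
    (CMI p U Y1 (fun ω => (Th ω, if Th ω then Sum.inl (W ω) else Sum.inr (U ω)))
      - CMI p U Y2 (fun ω => (Th ω, if Th ω then Sum.inl (W ω) else Sum.inr (U ω)))
      = lam * (CMI p U Y1 W - CMI p U Y2 W)) ∧
    (MI p (fun ω => (Th ω, if Th ω then Sum.inl (W ω) else Sum.inr (U ω))) Y2
      = MI p W Y2 + (1 - lam) * CMI p U Y2 W) ∧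
    MI p W Y2 ≤
      MI p (fun ω => (Th ω, if Th ω then Sum.inl (W ω) else Sum.inr (U ω))) Y2 := by
  have hThF : distOf p Th false = 1 - lam := by
    have h := sum_distOf p hp Th
    rw [Fintype.sum_bool, hThLam] at h
    linarith
  -- independence instances pulled through projections of the big tuple
  have hiU : ∀ t x, distOf p (fun ω => (Th ω, U ω, W ω, U ω)) (t, x)
      = distOf p Th t * distOf p (fun ω => (U ω, W ω, U ω)) x :=
    fun t x => ind_pull p Th (fun ω => (W ω, U ω, X ω, Y1 ω, Y2 ω)) hThInd
      (fun v => (v.2.1, v.1, v.2.1)) t x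
  have hiY1 : ∀ t x, distOf p (fun ω => (Th ω, Y1 ω, W ω, U ω)) (t, x)
      = distOf p Th t * distOf p (fun ω => (Y1 ω, W ω, U ω)) x :=
    fun t x => ind_pull p Th (fun ω => (W ω, U ω, X ω, Y1 ω, Y2 ω)) hThInd
      (fun v => (v.2.2.2.1, v.1, v.2.1)) t x
  have hiY2 : ∀ t x, distOf p (fun ω => (Th ω, Y2 ω, W ω, U ω)) (t, x)
      = distOf p Th t * distOf p (fun ω => (Y2 ω, W ω, U ω)) x :=
    fun t x => ind_pull p Th (fun ω => (W ω, U ω, X ω, Y1 ω, Y2 ω)) hThInd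
      (fun v => (v.2.2.2.2, v.1, v.2.1)) t x
  have hiUY1 : ∀ t x, distOf p (fun ω => (Th ω, (U ω, Y1 ω), W ω, U ω)) (t, x)
      = distOf p Th t * distOf p (fun ω => ((U ω, Y1 ω), W ω, U ω)) x :=
    fun t x => ind_pull p Th (fun ω => (W ω, U ω, X ω, Y1 ω, Y2 ω)) hThInd
      (fun v => ((v.2.1, v.2.2.2.1), v.1, v.2.1)) t x
  have hiUY2 : ∀ t x, distOf p (fun ω => (Th ω, (U ω, Y2 ω), W ω, U ω)) (t, x)
      = distOf p Th t * distOf p (fun ω => ((U ω, Y2 ω), W ω, U ω)) x :=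
    fun t x => ind_pull p Th (fun ω => (W ω, U ω, X ω, Y1 ω, Y2 ω)) hThInd
      (fun v => ((v.2.1, v.2.2.2.2), v.1, v.2.1)) t x
  have hiUnit : ∀ t x, distOf p (fun ω => (Th ω, (), W ω, U ω)) (t, x)
      = distOf p Th t * distOf p (fun ω => ((), W ω, U ω)) x :=
    fun t x => ind_pull p Th (fun ω => (W ω, U ω, X ω, Y1 ω, Y2 ω)) hThInd
      (fun v => ((), v.1, v.2.1)) t x
  -- mixture entropy identities
  have eU := Hent_mix p hp Th W U U hiU
  have eY1 := Hent_mix p hp Th W U Y1 hiY1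
  have eY2 := Hent_mix p hp Th W U Y2 hiY2
  have eUY1 := Hent_mix p hp Th W U (fun ω => (U ω, Y1 ω)) hiUY1
  have eUY2 := Hent_mix p hp Th W U (fun ω => (U ω, Y2 ω)) hiUY2
  have eUnit := Hent_mix p hp Th W U (fun _ => ()) hiUnit
  rw [hThLam, hThF] at eU eY1 eY2 eUY1 eUY2 eUnit
  rw [Hent_unit p (fun ω => (W ω)), Hent_unit p (fun ω => (U ω))] at eUnit
  have eZ : Hent p (fun ω => (Th ω, if Th ω then Sum.inl (W ω) else Sum.inr (U ω)))
      = Hent p Th + lam * Hent p W + (1 - lam) * Hent p U := by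
    rw [← Hent_unit p (fun ω => (Th ω, if Th ω then Sum.inl (W ω) else Sum.inr (U ω)))]
    exact eUnit
  -- conditional independence of W and Y2 given U (marginalized Markov property)
  have mA : ∀ (w : WT) (y2 : B2) (u : UT),
      distOf p (fun ω => (W ω, Y2 ω, U ω)) (w, y2, u)
        = ∑ z : B1 × XT,
            distOf p (fun ω => ((Y1 ω, Y2 ω, X ω), W ω, U ω)) ((z.1, y2, z.2), w, u) := by
    intro w y2 u
    unfold distOf
    rw [Finset.sum_comm]
    refine Finset.sum_congr rfl fun ω _ => ?_
    by_cases h1 : W ω = w <;> by_cases h2 : Y2 ω = y2 <;> by_cases h3 : U ω = u <;>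
      simp [Prod.ext_iff, h1, h2, h3, ite_and, Fintype.sum_prod_type, Finset.sum_ite_eq]
  have mB : ∀ (y2 : B2) (u : UT),
      distOf p (fun ω => (Y2 ω, U ω)) (y2, u)
        = ∑ z : B1 × XT,
            distOf p (fun ω => ((Y1 ω, Y2 ω, X ω), U ω)) ((z.1, y2, z.2), u) := by
    intro y2 u
    unfold distOf
    rw [Finset.sum_comm]
    refine Finset.sum_congr rfl fun ω _ => ?_
    by_cases h2 : Y2 ω = y2 <;> by_cases h3 : U ω = u <;>
      simp [Prod.ext_iff, h2, h3, ite_and, Fintype.sum_prod_type, Finset.sum_ite_eq]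
  have hCI : CondIndep p W Y2 U := by
    intro w y2 u
    calc distOf p (fun ω => (W ω, Y2 ω, U ω)) (w, y2, u) * distOf p U u
        = ∑ z : B1 × XT,
            distOf p (fun ω => ((Y1 ω, Y2 ω, X ω), W ω, U ω)) ((z.1, y2, z.2), w, u)
              * distOf p U u := by rw [mA w y2 u, Finset.sum_mul]
      _ = ∑ z : B1 × XT,
            distOf p (fun ω => ((Y1 ω, Y2 ω, X ω), U ω)) ((z.1, y2, z.2), u)
              * distOf p (fun ω => (W ω, U ω)) (w, u) :=
          Finset.sum_congr rfl fun z _ => hMarkov2 (z.1, y2, z.2) w u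
      _ = distOf p (fun ω => (Y2 ω, U ω)) (y2, u) * distOf p (fun ω => (W ω, U ω)) (w, u) := by
          rw [← Finset.sum_mul, ← mB y2 u]
      _ = distOf p (fun ω => (W ω, U ω)) (w, u) * distOf p (fun ω => (Y2 ω, U ω)) (y2, u) :=
          mul_comm _ _
  -- Part 1
  have c1 : CMI p U Y1 (fun ω => (Th ω, if Th ω then Sum.inl (W ω) else Sum.inr (U ω)))
      = lam * CMI p U Y1 W := by
    simp only [CMI]
    rw [Hent_assoc p U Y1 (fun ω => (Th ω, if Th ω then Sum.inl (W ω) else Sum.inr (U ω)))]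
    rw [eU, eY1, eUY1, eZ, Hent_assoc p U Y1 W, Hent_diag p U, Hent_pair_fst p U Y1,
      Hent_swap p Y1 U]
    ring
  have c2 : CMI p U Y2 (fun ω => (Th ω, if Th ω then Sum.inl (W ω) else Sum.inr (U ω)))
      = lam * CMI p U Y2 W := by
    simp only [CMI]
    rw [Hent_assoc p U Y2 (fun ω => (Th ω, if Th ω then Sum.inl (W ω) else Sum.inr (U ω)))]
    rw [eU, eY2, eUY2, eZ, Hent_assoc p U Y2 W, Hent_diag p U, Hent_pair_fst p U Y2,
      Hent_swap p Y2 U]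
    ring
  -- Part 2
  have hZY2 : MI p (fun ω => (Th ω, if Th ω then Sum.inl (W ω) else Sum.inr (U ω))) Y2
      = lam * MI p W Y2 + (1 - lam) * MI p U Y2 := by
    simp only [MI]
    rw [Hent_swap p (fun ω => (Th ω, if Th ω then Sum.inl (W ω) else Sum.inr (U ω))) Y2]
    rw [eY2, eZ, Hent_swap p Y2 W, Hent_swap p Y2 U]
    ring
  have hchain : MI p U Y2 + CMI p W Y2 U = MI p W Y2 + CMI p U Y2 W := by
    simp only [MI, CMI]
    rw [Hent_swap p Y2 U, Hent_swap p Y2 W, Hent_swap p W U, Hent_perm3 p W Y2 U]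
    ring
  have hCMI0 : CMI p W Y2 U = 0 := CMI_eq_zero p W Y2 U hp hCI
  have hMIU : MI p U Y2 = MI p W Y2 + CMI p U Y2 W := by linarith
  have part2 : MI p (fun ω => (Th ω, if Th ω then Sum.inl (W ω) else Sum.inr (U ω))) Y2
      = MI p W Y2 + (1 - lam) * CMI p U Y2 W := by
    rw [hZY2, hMIU]; ring
  refine ⟨by rw [c1, c2]; ring, part2, ?_⟩
  rw [part2]
  have := CMI_nonneg p U Y2 W hp
  nlinarith
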